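/- (Conjugate of the infimal convolution.) For every x ∈ ℝ, the supremum over 𝔞 ∈ [0, Σ_{j=1}^J λʲ m̄ʲ] of ( x 𝔞 - L(𝔞) ) equals Σ_{j=1}^J Hʲ(x), where L(𝔞) := inf { Σ_{j=1}^J Lʲ(aʲ) : aʲ ∈ [0, λʲ m̄ʲ] for each j and Σ_{j=1}^J aʲ = 𝔞 }. -/

import Mathlib

open MeasureTheory Filter Set


lemma onedim (f F G L H Ginv : ℝ → ℝ) (mbar lam alpha x : ℝ)
    (hf_cont : Continuous f)
    (hf_nonpos : ∀ p ≤ (0:ℝ), f p = 0)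
    (hf_pos : ∀ p : ℝ, 0 < p → 0 < f p)
    (hf_int : (∫ p in Set.Ioi (0:ℝ), f p) = 1)
    (hmean_int : MeasureTheory.IntegrableOn (fun p : ℝ => p * f p) (Set.Ioi 0))
    (hmbar : mbar = ∫ p in Set.Ioi (0:ℝ), p * f p)
    (hF : ∀ b : ℝ, F b = ∫ p in (0:ℝ)..b, f p)
    (hG : ∀ b : ℝ, G b = ∫ p in (0:ℝ)..b, p * f p)
    (hlam : 0 < lam) (halpha : 0 < alpha)
    (hGbij : Set.BijOn G (Set.Ici 0) (Set.Ico 0 mbar))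
    (hGinv : ∀ a ∈ Set.Ico (0:ℝ) mbar, Ginv a ∈ Set.Ici (0:ℝ) ∧ G (Ginv a) = a)
    (hL : ∀ a ∈ Set.Ico (0:ℝ) (lam * mbar),
      L a = -(lam * alpha) * F (Ginv (a / lam)))
    (hLend : L (lam * mbar) = -(lam * alpha))
    (hHneg : x < 0 → H x = -(lam * x) * ∫ p in (0:ℝ)..(-alpha / x), F p)
    (hHpos : 0 ≤ x → H x = lam * (alpha + x * mbar)) :
    0 < mbar ∧ ∃ astar ∈ Set.Icc (0:ℝ) (lam * mbar),
      x * astar - L astar = H x ∧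
      (∀ a ∈ Set.Icc (0:ℝ) (lam * mbar), x * a - L a ≤ H x) ∧
      (∀ a ∈ Set.Icc (0:ℝ) (lam * mbar), -(lam * alpha) ≤ L a) := by
  have eF : F = fun b => ∫ p in (0:ℝ)..b, f p := funext hF
  have eG : G = fun b => ∫ p in (0:ℝ)..b, p * f p := funext hG
  have hfnn : ∀ p, 0 ≤ f p := fun p =>
    (le_or_gt p 0).elim (fun h => (hf_nonpos p h).ge) (fun h => (hf_pos p h).le)
  have hgnn : ∀ p : ℝ, 0 ≤ p * f p := fun p =>
    (le_or_gt p 0).elim (fun h => by rw [hf_nonpos p h]; simp)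
      (fun h => (mul_pos h (hf_pos p h)).le)
  have hgc : Continuous (fun p : ℝ => p * f p) := continuous_id.mul hf_cont
  have hfi : IntegrableOn f (Set.Ioi (0:ℝ)) := by
    by_contra h
    rw [MeasureTheory.integral_undef h] at hf_int
    exact one_ne_zero hf_int.symm
  have hFd : ∀ b : ℝ, HasDerivAt F (f b) b := by
    intro b; rw [eF]
    exact intervalIntegral.integral_hasDerivAt_right (hf_cont.intervalIntegrable _ _)
      (hf_cont.stronglyMeasurableAtFilter _ _) hf_cont.continuousAt
  have hGd : ∀ b : ℝ, HasDerivAt G (b * f b) b := by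
    intro b; rw [eG]
    exact intervalIntegral.integral_hasDerivAt_right (hgc.intervalIntegrable _ _)
      (hgc.stronglyMeasurableAtFilter _ _) hgc.continuousAt
  have hF0 : F 0 = 0 := by rw [hF]; simp
  have hG0 : G 0 = 0 := by rw [hG]; simp
  have hFmono : Monotone F :=
    monotone_of_deriv_nonneg (fun b => (hFd b).differentiableAt)
      (fun b => by rw [(hFd b).deriv]; exact hfnn b)
  have hGmono : Monotone G :=
    monotone_of_deriv_nonneg (fun b => (hGd b).differentiableAt)
      (fun b => by rw [(hGd b).deriv]; exact hgnn b)
  have hFlim : Tendsto F atTop (nhds 1) := by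
    rw [eF, ← hf_int]
    exact MeasureTheory.intervalIntegral_tendsto_integral_Ioi 0 hfi tendsto_id
  have hGlim : Tendsto G atTop (nhds mbar) := by
    rw [eG, hmbar]
    exact MeasureTheory.intervalIntegral_tendsto_integral_Ioi 0 hmean_int tendsto_id
  have hFle1 : ∀ b, F b ≤ 1 := fun b =>
    ge_of_tendsto hFlim (Filter.eventually_atTop.2 ⟨b, fun t ht => hFmono ht⟩)
  have hmpos : 0 < mbar := by
    have h0 := hGbij.mapsTo (mem_Ici.2 (le_refl (0:ℝ)))
    rw [hG0] at h0
    exact h0.2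
  have hlmpos : 0 < lam * mbar := mul_pos hlam hmpos
  -- lower bound on L
  have hlbL : ∀ a ∈ Set.Icc (0:ℝ) (lam * mbar), -(lam * alpha) ≤ L a := by
    rintro a ⟨ha0, ha1⟩
    rcases eq_or_lt_of_le ha1 with rfl | hlt
    · rw [hLend]
    · have hmem : a / lam ∈ Set.Ico (0:ℝ) mbar :=
        ⟨div_nonneg ha0 hlam.le, (div_lt_iff₀ hlam).2 (by linarith)⟩
      rw [hL a ⟨ha0, hlt⟩]
      have h1 : F (Ginv (a / lam)) ≤ 1 := hFle1 _
      nlinarith [mul_pos hlam halpha]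
  -- integration by parts
  have hIBP : ∀ b : ℝ, (∫ p in (0:ℝ)..b, F p) = b * F b - G b := by
    intro b
    have h := intervalIntegral.integral_mul_deriv_eq_deriv_mul (a := (0:ℝ)) (b := b)
      (u := F) (v := fun p => p) (u' := f) (v' := fun _ => (1:ℝ))
      (fun p _ => hFd p) (fun p _ => hasDerivAt_id p)
      (hf_cont.intervalIntegrable 0 b) intervalIntegrable_const
    have hcomm : (∫ p in (0:ℝ)..b, f p * p) = G b := by
      rw [hG]
      exact intervalIntegral.integral_congr fun p _ => mul_comm (f p) p
    simp only [mul_one] at h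
    rw [h, hF0, hcomm]; ring
  rcases le_or_gt 0 x with hx | hx
  · -- nonnegative x
    refine ⟨hmpos, lam * mbar, ⟨hlmpos.le, le_rfl⟩, ?_, ?_, hlbL⟩
    · rw [hLend, hHpos hx]; ring
    · rintro a ⟨ha0, ha1⟩
      have h1 := hlbL a ⟨ha0, ha1⟩
      have hxa : x * a ≤ x * (lam * mbar) := mul_le_mul_of_nonneg_left ha1 hx
      rw [hHpos hx]; nlinarith
  · -- negative x
    have hxne : x ≠ 0 := hx.ne
    set b₀ : ℝ := -alpha / x with hb0
    have hb0pos : 0 < b₀ := div_pos_of_neg_of_neg (by linarith) hx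
    have hxb : x * b₀ = -alpha := by rw [hb0]; field_simp
    set ψ : ℝ → ℝ := fun t => x * G t + alpha * F t with hψ
    have hψd : ∀ t, HasDerivAt ψ (f t * (x * t + alpha)) t := by
      intro t
      have h := ((hGd t).const_mul x).add ((hFd t).const_mul alpha)
      exact h.congr_deriv (by ring)
    have hψcont : Continuous ψ := by
      have : Differentiable ℝ ψ := fun t => (hψd t).differentiableAt
      exact this.continuous
    have hψmono : MonotoneOn ψ (Set.Icc 0 b₀) := by
      apply monotoneOn_of_deriv_nonneg (convex_Icc _ _) hψcont.continuousOn
        (fun t _ => (hψd t).differentiableAt.differentiableWithinAt)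
      intro t ht
      rw [interior_Icc] at ht
      rw [(hψd t).deriv]
      have h2 : x * b₀ ≤ x * t := mul_le_mul_of_nonpos_left ht.2.le hx.le
      have h3 : 0 ≤ x * t + alpha := by rw [hxb] at h2; linarith
      exact mul_nonneg (hfnn t) h3
    have hψanti : AntitoneOn ψ (Set.Ici b₀) := by
      apply antitoneOn_of_deriv_nonpos (convex_Ici _) hψcont.continuousOn
        (fun t _ => (hψd t).differentiableAt.differentiableWithinAt)
      intro t ht
      rw [interior_Ici] at ht
      rw [(hψd t).deriv]
      have h2 : x * t ≤ x * b₀ := mul_le_mul_of_nonpos_left (le_of_lt ht) hx.le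
      have h3 : x * t + alpha ≤ 0 := by rw [hxb] at h2; linarith
      exact mul_nonpos_of_nonneg_of_nonpos (hfnn t) h3
    have hψmax : ∀ t, 0 ≤ t → ψ t ≤ ψ b₀ := by
      intro t ht
      rcases le_or_gt t b₀ with h | h
      · exact hψmono ⟨ht, h⟩ ⟨hb0pos.le, le_rfl⟩ h
      · exact hψanti (mem_Ici.2 le_rfl) (mem_Ici.2 h.le) h.le
    have hψlim : Tendsto ψ atTop (nhds (x * mbar + alpha * 1)) :=
      (hGlim.const_mul x).add (hFlim.const_mul alpha)
    have hψend : x * mbar + alpha ≤ ψ b₀ := by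
      have h := le_of_tendsto hψlim (Filter.eventually_atTop.2
        ⟨b₀, fun t ht => hψanti (mem_Ici.2 le_rfl) (mem_Ici.2 ht) ht⟩)
      linarith
    have hHval : H x = lam * ψ b₀ := by
      rw [hHneg hx, hIBP b₀]
      simp only [hψ]
      linear_combination (-(lam * F b₀)) * hxb
    have hGb0 : G b₀ ∈ Set.Ico 0 mbar := hGbij.mapsTo (mem_Ici.2 hb0pos.le)
    have key : ∀ b : ℝ, 0 ≤ b → G b < mbar →
        x * (lam * G b) - L (lam * G b) = lam * ψ b := by
      intro b hb hbm
      have hGbnn : 0 ≤ G b := by rw [← hG0]; exact hGmono hb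
      have hmem : lam * G b ∈ Set.Ico (0:ℝ) (lam * mbar) :=
        ⟨mul_nonneg hlam.le hGbnn, (mul_lt_mul_iff_right₀ hlam).2 hbm⟩
      rw [hL _ hmem]
      have hdiv : lam * G b / lam = G b := by field_simp
      rw [hdiv]
      obtain ⟨hgi, hgG⟩ := hGinv (G b) ⟨hGbnn, hbm⟩
      have hGinvGb : Ginv (G b) = b := hGbij.injOn hgi (mem_Ici.2 hb) hgG
      rw [hGinvGb, hψ]; ring
    refine ⟨hmpos, lam * G b₀,
      ⟨mul_nonneg hlam.le hGb0.1, ((mul_lt_mul_iff_right₀ hlam).2 hGb0.2).le⟩, ?_, ?_, hlbL⟩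
    · rw [key b₀ hb0pos.le hGb0.2, hHval]
    · rintro a ⟨ha0, ha1⟩
      rcases eq_or_lt_of_le ha1 with rfl | hlt
      · rw [hLend, hHval]
        nlinarith [mul_le_mul_of_nonneg_left hψend hlam.le]
      · have hmem : a / lam ∈ Set.Ico (0:ℝ) mbar :=
          ⟨div_nonneg ha0 hlam.le, (div_lt_iff₀ hlam).2 (by linarith)⟩
        obtain ⟨hgi, hgG⟩ := hGinv (a / lam) hmem
        have ha' : a = lam * G (Ginv (a / lam)) := by
          rw [hgG]; field_simp
        have hGlt : G (Ginv (a / lam)) < mbar := by rw [hgG]; exact hmem.2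
        have hval : x * a - L a = lam * ψ (Ginv (a / lam)) := by
          have h := key _ hgi hGlt
          rwa [← ha'] at h
        rw [hval, hHval]
        exact mul_le_mul_of_nonneg_left (hψmax _ hgi) hlam.le

/-- (Conjugate of the infimal convolution.) For every `x ∈ ℝ`,
`sup_{𝔞 ∈ [0, Σⱼ λʲ m̄ʲ]} (x 𝔞 - L(𝔞)) = Σⱼ Hʲ(x)`, where
`L(𝔞) = inf { Σⱼ Lʲ(aʲ) : aʲ ∈ [0, λʲ m̄ʲ], Σⱼ aʲ = 𝔞 }`. -/
theorem stmt_16 (J : ℕ) (hJ : 1 < J)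
    (f F G L H Ginv : Fin J → ℝ → ℝ) (mbar lam alpha : Fin J → ℝ)
    (hf_cont : ∀ j, Continuous (f j))
    (hf_nonpos : ∀ j, ∀ p ≤ (0 : ℝ), f j p = 0)
    (hf_pos : ∀ j, ∀ p : ℝ, 0 < p → 0 < f j p)
    (hf_int : ∀ j, (∫ p in Set.Ioi (0 : ℝ), f j p) = 1)
    (hf_tail : ∀ j, Filter.Tendsto (fun p : ℝ => p ^ 3 * f j p) Filter.atTop (nhds 0))
    (hmean_int : ∀ j, MeasureTheory.IntegrableOn (fun p : ℝ => p * f j p) (Set.Ioi 0))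
    (hmbar : ∀ j, mbar j = ∫ p in Set.Ioi (0 : ℝ), p * f j p)
    (hF : ∀ j, ∀ b : ℝ, F j b = ∫ p in (0 : ℝ)..b, f j p)
    (hG : ∀ j, ∀ b : ℝ, G j b = ∫ p in (0 : ℝ)..b, p * f j p)
    (hlam : ∀ j, 0 < lam j) (halpha : ∀ j, 0 < alpha j)
    (hGbij : ∀ j, Set.BijOn (G j) (Set.Ici 0) (Set.Ico 0 (mbar j)))
    (hGinv : ∀ j, ∀ a ∈ Set.Ico (0 : ℝ) (mbar j),
      Ginv j a ∈ Set.Ici (0 : ℝ) ∧ G j (Ginv j a) = a)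
    (hL : ∀ j, ∀ a ∈ Set.Ico (0 : ℝ) (lam j * mbar j),
      L j a = -(lam j * alpha j) * F j (Ginv j (a / lam j)))
    (hLend : ∀ j, L j (lam j * mbar j) = -(lam j * alpha j))
    (hHneg : ∀ j, ∀ x < (0 : ℝ),
      H j x = -(lam j * x) * ∫ p in (0 : ℝ)..(-(alpha j) / x), F j p)
    (hHpos : ∀ j, ∀ x : ℝ, 0 ≤ x → H j x = lam j * (alpha j + x * mbar j))
    (x : ℝ) :
    sSup ((fun A : ℝ => x * A -
        sInf {v : ℝ | ∃ a : Fin J → ℝ,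
          (∀ j, a j ∈ Set.Icc (0 : ℝ) (lam j * mbar j)) ∧
          (∑ j, a j) = A ∧ v = ∑ j, L j (a j)})
        '' Set.Icc 0 (∑ j, lam j * mbar j))
      = ∑ j, H j x := by
  have hone : ∀ j : Fin J, 0 < mbar j ∧ ∃ astar ∈ Set.Icc (0:ℝ) (lam j * mbar j),
      x * astar - L j astar = H j x ∧
      (∀ a ∈ Set.Icc (0:ℝ) (lam j * mbar j), x * a - L j a ≤ H j x) ∧
      (∀ a ∈ Set.Icc (0:ℝ) (lam j * mbar j), -(lam j * alpha j) ≤ L j a) :=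
    fun j => onedim (f j) (F j) (G j) (L j) (H j) (Ginv j) (mbar j) (lam j) (alpha j) x
      (hf_cont j) (hf_nonpos j) (hf_pos j) (hf_int j) (hmean_int j) (hmbar j)
      (hF j) (hG j) (hlam j) (halpha j) (hGbij j) (hGinv j) (hL j) (hLend j)
      (fun hx => hHneg j x hx) (fun hx => hHpos j x hx)
  choose hmpos astar hmem hval hub hlb using hone
  set T := ∑ j, lam j * mbar j with hT
  have hTpos : 0 < T :=
    Finset.sum_pos (fun j _ => mul_pos (hlam j) (hmpos j))
      ⟨⟨0, by omega⟩, Finset.mem_univ _⟩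
  have hbdd : ∀ A : ℝ, BddBelow {v : ℝ | ∃ a : Fin J → ℝ,
      (∀ j, a j ∈ Set.Icc (0 : ℝ) (lam j * mbar j)) ∧
      (∑ j, a j) = A ∧ v = ∑ j, L j (a j)} := by
    intro A
    refine ⟨∑ j, -(lam j * alpha j), ?_⟩
    rintro v ⟨a, hamem, -, rfl⟩
    exact Finset.sum_le_sum fun j _ => hlb j _ (hamem j)
  have hubA : ∀ A ∈ Set.Icc (0:ℝ) T,
      x * A - sInf {v : ℝ | ∃ a : Fin J → ℝ,
        (∀ j, a j ∈ Set.Icc (0 : ℝ) (lam j * mbar j)) ∧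
        (∑ j, a j) = A ∧ v = ∑ j, L j (a j)} ≤ ∑ j, H j x := by
    rintro A ⟨hA0, hA1⟩
    have hwit : ∀ j : Fin J, (A/T) * (lam j * mbar j) ∈ Set.Icc (0:ℝ) (lam j * mbar j) := by
      intro j
      have h1 : 0 ≤ A/T := div_nonneg hA0 hTpos.le
      have h2 : A/T ≤ 1 := (div_le_one hTpos).2 hA1
      have h3 : 0 ≤ lam j * mbar j := (mul_pos (hlam j) (hmpos j)).le
      exact ⟨mul_nonneg h1 h3, by nlinarith⟩
    have hwsum : ∑ j, (A/T) * (lam j * mbar j) = A := by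
      rw [← Finset.mul_sum, ← hT]
      field_simp
    have hne : {v : ℝ | ∃ a : Fin J → ℝ,
        (∀ j, a j ∈ Set.Icc (0 : ℝ) (lam j * mbar j)) ∧
        (∑ j, a j) = A ∧ v = ∑ j, L j (a j)}.Nonempty :=
      ⟨∑ j, L j ((A/T) * (lam j * mbar j)),
        fun j => (A/T) * (lam j * mbar j), hwit, hwsum, rfl⟩
    have hinf : x * A - ∑ j, H j x ≤ sInf {v : ℝ | ∃ a : Fin J → ℝ,
        (∀ j, a j ∈ Set.Icc (0 : ℝ) (lam j * mbar j)) ∧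
        (∑ j, a j) = A ∧ v = ∑ j, L j (a j)} := by
      refine le_csInf hne ?_
      rintro v ⟨a, hamem, hasum, rfl⟩
      have h1 : ∑ j, (x * a j - L j (a j)) ≤ ∑ j, H j x :=
        Finset.sum_le_sum fun j _ => hub j _ (hamem j)
      rw [Finset.sum_sub_distrib, ← Finset.mul_sum, hasum] at h1
      linarith
    linarith
  have hAstar_mem : (∑ j, astar j) ∈ Set.Icc (0:ℝ) T :=
    ⟨Finset.sum_nonneg fun j _ => (hmem j).1, Finset.sum_le_sum fun j _ => (hmem j).2⟩
  have heq : x * (∑ j, astar j) - sInf {v : ℝ | ∃ a : Fin J → ℝ,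
      (∀ j, a j ∈ Set.Icc (0 : ℝ) (lam j * mbar j)) ∧
      (∑ j, a j) = (∑ j, astar j) ∧ v = ∑ j, L j (a j)} = ∑ j, H j x := by
    refine le_antisymm (hubA _ hAstar_mem) ?_
    have hinf_le : sInf {v : ℝ | ∃ a : Fin J → ℝ,
        (∀ j, a j ∈ Set.Icc (0 : ℝ) (lam j * mbar j)) ∧
        (∑ j, a j) = (∑ j, astar j) ∧ v = ∑ j, L j (a j)} ≤ ∑ j, L j (astar j) :=
      csInf_le (hbdd _) ⟨astar, hmem, rfl, rfl⟩
    have h1 : ∑ j, H j x = ∑ j, (x * astar j - L j (astar j)) :=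
      Finset.sum_congr rfl fun j _ => (hval j).symm
    rw [h1, Finset.sum_sub_distrib, ← Finset.mul_sum]
    linarith
  have hmemS : (∑ j, H j x) ∈ ((fun A : ℝ => x * A -
      sInf {v : ℝ | ∃ a : Fin J → ℝ,
        (∀ j, a j ∈ Set.Icc (0 : ℝ) (lam j * mbar j)) ∧
        (∑ j, a j) = A ∧ v = ∑ j, L j (a j)})
      '' Set.Icc 0 T) := ⟨∑ j, astar j, hAstar_mem, heq⟩
  refine le_antisymm (csSup_le ⟨_, hmemS⟩ ?_) (le_csSup ⟨∑ j, H j x, ?_⟩ hmemS)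
  · rintro y ⟨A, hA, rfl⟩
    exact hubA A hA
  · rintro y ⟨A, hA, rfl⟩
    exact hubA A hA
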